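/- Let (α_n) be nonnegative random variables forming a sequence with α_n → α in L^k for every k ∈ ℕ, such that E[α_n^{2k}] ≤ E[α^{2k}] for all n and k. If E cosh(α) < ∞, then E exp(α_n) → E exp(α) < ∞. -/

import Mathlib

open MeasureTheory Filter
open scoped Nat

private lemma pow_eq_sq (x : ℝ) (j : ℕ) : (x^j)^2 = x^(2*j) := by
  rw [← pow_mul, Nat.mul_comm]

private lemma odd_pow_le (j : ℕ) (x : ℝ) (hx : 0 ≤ x) :
    x ^ (2*j+1) ≤ x ^ (2*j) + x ^ (2*j+2) := by
  have h1 : (x^j)^2 = x^(2*j) := pow_eq_sq x j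
  have h2 : (x^(j+1))^2 = x^(2*j+2) := by rw [← pow_mul]; congr 1; omega
  have h3 : x^j * x^(j+1) = x^(2*j+1) := by rw [← pow_add]; congr 1; omega
  nlinarith [sq_nonneg (x^j - x^(j+1)), pow_nonneg hx j, pow_nonneg hx (j+1)]

private lemma odd_term_le (j : ℕ) (x : ℝ) (hx : 0 ≤ x) :
    x ^ (2*j+1) / (2*j+1)! ≤ x ^ (2*j) / (2*j)! + x ^ (2*j+2) / (2*j+2)! := by
  have hA : (0:ℝ) < (2*j)! := by exact_mod_cast Nat.factorial_pos _
  have hB : (0:ℝ) < (2*j+1)! := by exact_mod_cast Nat.factorial_pos _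
  have hD : (0:ℝ) < (2*j+2)! := by exact_mod_cast Nat.factorial_pos _
  have e1 : ((2*j+1)! : ℝ) = (2*j+1) * (2*j)! := by
    rw [Nat.factorial_succ]; push_cast; ring
  have e2 : ((2*j+2)! : ℝ) = (2*j+2) * ((2*j+1) * (2*j)!) := by
    rw [show 2*j+2 = (2*j+1)+1 from rfl, Nat.factorial_succ, Nat.factorial_succ]
    push_cast; ring
  have h1 : (x^j)^2 = x^(2*j) := pow_eq_sq x j
  have h2 : (x^(j+1))^2 = x^(2*j+2) := by rw [← pow_mul]; congr 1; omega
  have h3 : x^j * x^(j+1) = x^(2*j+1) := by rw [← pow_add]; congr 1; omega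
  have hu : 0 ≤ x^j := pow_nonneg hx _
  have hv : 0 ≤ x^(j+1) := pow_nonneg hx _
  set u := x^j
  set v := x^(j+1)
  have key : ((2:ℝ)*j+2) * (u*v) ≤ ((2*j+1)*(2*j+2)) * u^2 + v^2 := by
    nlinarith [sq_nonneg ((2*(j:ℝ)+2)*u - v), mul_nonneg hu hv, sq_nonneg u,
      mul_nonneg (Nat.cast_nonneg j : (0:ℝ) ≤ j) (sq_nonneg u), sq_nonneg v]
  rw [← h1, ← h2, ← h3, e1, e2]
  rw [div_add_div _ _ (by positivity) (by positivity),
    div_le_div_iff₀ (by positivity) (by positivity)]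
  nlinarith [mul_le_mul_of_nonneg_left key
    (by positivity : (0:ℝ) ≤ ((2*(j:ℝ)+1)*(2*j)!)^2), hA, hB]

private lemma even_sum_le_exp (J : ℕ) (x : ℝ) (hx : 0 ≤ x) :
    ∑ j ∈ Finset.range J, x^(2*j)/(2*j)! ≤ Real.exp x := by
  have himg : ∑ j ∈ Finset.range J, x^(2*j)/(2*j)!
      = ∑ i ∈ (Finset.range J).image (fun j => 2*j), x^i/i ! := by
    rw [Finset.sum_image (fun m _ n _ h => by omega)]
  rw [himg]
  calc ∑ i ∈ (Finset.range J).image (fun j => 2*j), x^i/i !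
      ≤ ∑ i ∈ Finset.range (2*J), x^i/i ! := by
        apply Finset.sum_le_sum_of_subset_of_nonneg
        · intro i hi
          simp only [Finset.mem_image, Finset.mem_range] at hi ⊢
          omega
        · intro i _ _; positivity
    _ ≤ Real.exp x := Real.sum_le_exp_of_nonneg hx _

private lemma young2 (t d u : ℝ) (ht : 0 < t) : d * u ≤ t/2*d^2 + u^2/(2*t) := by
  rw [← sub_nonneg]
  have h : t/2*d^2 + u^2/(2*t) - d*u = (t*d - u)^2/(2*t) := by
    field_simp; ring
  rw [h]; positivity

private lemma pow_diff_bound (k : ℕ) (t x y : ℝ) (ht : 0 < t)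
    (hx : 0 ≤ x) (hy : 0 ≤ y) :
    |x^k - y^k| ≤ k*t*(x-y)^2 + k/(2*t)*(x^(2*(k-1)) + y^(2*(k-1))) := by
  have h1 : |x^k - y^k| ≤ k * (|x - y| * (x^(k-1) + y^(k-1))) := by
    have hgeom := geom_sum₂_mul x y k
    rw [← hgeom, abs_mul]
    have hterm : ∀ i ∈ Finset.range k, |x^i * y^(k-1-i)| ≤ x^(k-1) + y^(k-1) := by
      intro i hi
      rw [Finset.mem_range] at hi
      rw [abs_of_nonneg (mul_nonneg (pow_nonneg hx _) (pow_nonneg hy _))]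
      rcases le_total x y with hxy | hxy
      · calc x^i * y^(k-1-i) ≤ y^i * y^(k-1-i) :=
              mul_le_mul_of_nonneg_right (pow_le_pow_left₀ hx hxy i) (pow_nonneg hy _)
          _ = y^(k-1) := by rw [← pow_add]; congr 1; omega
          _ ≤ x^(k-1) + y^(k-1) := le_add_of_nonneg_left (pow_nonneg hx _)
      · calc x^i * y^(k-1-i) ≤ x^i * x^(k-1-i) :=
              mul_le_mul_of_nonneg_left (pow_le_pow_left₀ hy hxy _) (pow_nonneg hx _)
          _ = x^(k-1) := by rw [← pow_add]; congr 1; omega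
          _ ≤ x^(k-1) + y^(k-1) := le_add_of_nonneg_right (pow_nonneg hy _)
    have hsum : |∑ i ∈ Finset.range k, x^i * y^(k-1-i)| ≤ k * (x^(k-1) + y^(k-1)) := by
      calc |∑ i ∈ Finset.range k, x^i * y^(k-1-i)|
          ≤ ∑ i ∈ Finset.range k, |x^i * y^(k-1-i)| := Finset.abs_sum_le_sum_abs _ _
        _ ≤ ∑ _i ∈ Finset.range k, (x^(k-1) + y^(k-1)) := Finset.sum_le_sum hterm
        _ = k * (x^(k-1) + y^(k-1)) := by
            rw [Finset.sum_const, Finset.card_range, nsmul_eq_mul]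
    calc |∑ i ∈ Finset.range k, x^i * y^(k-1-i)| * |x - y|
        ≤ (k * (x^(k-1) + y^(k-1))) * |x - y| :=
          mul_le_mul_of_nonneg_right hsum (abs_nonneg _)
      _ = k * (|x - y| * (x^(k-1) + y^(k-1))) := by ring
  have hk0 : (0:ℝ) ≤ k := Nat.cast_nonneg k
  have h2x : |x - y| * x^(k-1) ≤ t/2*(x-y)^2 + (x^(k-1))^2/(2*t) := by
    have := young2 t |x - y| (x^(k-1)) ht
    rwa [sq_abs] at this
  have h2y : |x - y| * y^(k-1) ≤ t/2*(x-y)^2 + (y^(k-1))^2/(2*t) := by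
    have := young2 t |x - y| (y^(k-1)) ht
    rwa [sq_abs] at this
  calc |x^k - y^k| ≤ k * (|x - y| * (x^(k-1) + y^(k-1))) := h1
    _ = k * (|x - y| * x^(k-1)) + k * (|x - y| * y^(k-1)) := by ring
    _ ≤ k * (t/2*(x-y)^2 + (x^(k-1))^2/(2*t)) + k * (t/2*(x-y)^2 + (y^(k-1))^2/(2*t)) :=
        add_le_add (mul_le_mul_of_nonneg_left h2x hk0) (mul_le_mul_of_nonneg_left h2y hk0)
    _ = k*t*(x-y)^2 + k/(2*t)*((x^(k-1))^2 + (y^(k-1))^2) := by field_simp; ring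
    _ = k*t*(x-y)^2 + k/(2*t)*(x^(2*(k-1)) + y^(2*(k-1))) := by
        rw [pow_eq_sq, pow_eq_sq]
set_option maxHeartbeats 2000000 in
/-- If `α_n ≥ 0` converge to `α` in every `L^k`, the even moments of `α_n` are
dominated by those of `α`, and `E cosh α < ∞`, then `E exp(α_n) → E exp(α) < ∞`. -/
theorem exp_moment_convergence_of_cosh
    {Ω : Type*} [MeasurableSpace Ω] (μ : Measure Ω) [IsProbabilityMeasure μ]
    (α : ℕ → Ω → ℝ) (a : Ω → ℝ)
    (hmeas : ∀ n, Measurable (α n)) (hameas : Measurable a)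
    (hpos : ∀ n ω, 0 ≤ α n ω) (hapos : ∀ ω, 0 ≤ a ω)
    (hLk : ∀ k : ℕ, 1 ≤ k →
      Tendsto (fun n => ∫ ω, |α n ω - a ω| ^ k ∂μ) atTop (nhds 0))
    (hintn : ∀ n k : ℕ, Integrable (fun ω => (α n ω) ^ (2 * k)) μ)
    (hdom : ∀ n k : ℕ,
      (∫ ω, (α n ω) ^ (2 * k) ∂μ) ≤ ∫ ω, (a ω) ^ (2 * k) ∂μ)
    (hcosh : Integrable (fun ω => Real.cosh (a ω)) μ) :
    Integrable (fun ω => Real.exp (a ω)) μ ∧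
      Tendsto (fun n => ∫ ω, Real.exp (α n ω) ∂μ) atTop
        (nhds (∫ ω, Real.exp (a ω) ∂μ)) := by
  -- exp ≤ 2 cosh
  have hexp_le : ∀ x : ℝ, Real.exp x ≤ 2 * Real.cosh x := by
    intro x
    have := Real.exp_pos (-x)
    rw [Real.cosh_eq]; linarith
  have hexpa_int : Integrable (fun ω => Real.exp (a ω)) μ := by
    refine (hcosh.const_mul 2).mono' ?_ ?_
    · exact (Real.measurable_exp.comp hameas).aestronglyMeasurable
    · filter_upwards with ω
      rw [Real.norm_eq_abs, abs_of_pos (Real.exp_pos _)]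
      exact hexp_le (a ω)
  -- all moments of a are integrable
  have hpow_le_exp : ∀ (k : ℕ) (x : ℝ), 0 ≤ x → x ^ k / k ! ≤ Real.exp x := by
    intro k x hx
    calc x ^ k / k ! ≤ ∑ i ∈ Finset.range (k+1), x ^ i / i ! :=
          Finset.single_le_sum (f := fun i => x ^ i / i !)
            (fun i _ => by positivity) (Finset.self_mem_range_succ k)
      _ ≤ Real.exp x := Real.sum_le_exp_of_nonneg hx _
  have hinta : ∀ k : ℕ, Integrable (fun ω => (a ω) ^ k) μ := by
    intro k
    refine (hexpa_int.const_mul (k ! : ℝ)).mono' ?_ ?_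
    · exact (hameas.pow_const k).aestronglyMeasurable
    · filter_upwards with ω
      rw [Real.norm_eq_abs, abs_of_nonneg (pow_nonneg (hapos ω) _)]
      have h := hpow_le_exp k (a ω) (hapos ω)
      have hk : (0:ℝ) < k ! := by exact_mod_cast Nat.factorial_pos k
      rw [div_le_iff₀ hk] at h
      linarith [h]
  -- the summable bounding sequence
  set b : ℕ → ℝ := fun j => (∫ ω, (a ω) ^ (2*j) ∂μ) / (2*j)! with hb_def
  have hb_nonneg : ∀ j, 0 ≤ b j := fun j =>
    div_nonneg (integral_nonneg fun ω => pow_nonneg (hapos ω) _) (by positivity)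
  have hb_sum : Summable b := by
    apply summable_of_sum_range_le hb_nonneg (c := ∫ ω, Real.exp (a ω) ∂μ)
    intro J
    have h1 : ∑ j ∈ Finset.range J, b j
        = ∫ ω, ∑ j ∈ Finset.range J, (a ω) ^ (2*j) / (2*j)! ∂μ := by
      rw [integral_finset_sum _ (fun j _ => (hinta (2*j)).div_const _)]
      simp only [hb_def, integral_div]
    rw [h1]
    exact integral_mono
      (integrable_finset_sum _ (fun j _ => (hinta (2*j)).div_const _))
      hexpa_int (fun ω => even_sum_le_exp J (a ω) (hapos ω))
  set e : ℕ → ℝ := fun k => b (k/2) + b ((k+1)/2) with he_def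
  have he_nonneg : ∀ k, 0 ≤ e k := fun k => add_nonneg (hb_nonneg _) (hb_nonneg _)
  have he_sum : Summable e := by
    apply Summable.even_add_odd
    · have h : (fun k => e (2*k)) = fun k => b k + b k := by
        funext k
        show b ((2*k)/2) + b ((2*k+1)/2) = b k + b k
        rw [show (2*k)/2 = k by omega, show (2*k+1)/2 = k by omega]
      rw [h]; exact hb_sum.add hb_sum
    · have h : (fun k => e (2*k+1)) = fun k => b k + b (k+1) := by
        funext k
        show b ((2*k+1)/2) + b ((2*k+1+1)/2) = b k + b (k+1)
        rw [show (2*k+1)/2 = k by omega, show (2*k+1+1)/2 = k+1 by omega]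
      rw [h]; exact hb_sum.add ((summable_nat_add_iff 1).2 hb_sum)
  have hT : Tendsto (fun K => ∑' i, e (i + K)) atTop (nhds 0) := tendsto_sum_nat_add e
  -- master lemma for a generic nonneg function with dominated even moments
  have master : ∀ g : Ω → ℝ, Measurable g → (∀ ω, 0 ≤ g ω) →
      (∀ j : ℕ, Integrable (fun ω => g ω ^ (2*j)) μ) →
      (∀ j : ℕ, (∫ ω, g ω ^ (2*j) ∂μ) ≤ ∫ ω, (a ω) ^ (2*j) ∂μ) →
      (∀ k : ℕ, Integrable (fun ω => g ω ^ k) μ) ∧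
      (∀ k : ℕ, (∫ ω, g ω ^ k ∂μ) / k ! ≤ e k) ∧
      Integrable (fun ω => Real.exp (g ω)) μ ∧
      (∫ ω, Real.exp (g ω) ∂μ) = ∑' k, (∫ ω, g ω ^ k ∂μ) / k ! := by
    intro g hgm hg0 hg2 hgd
    have hIk : ∀ k : ℕ, Integrable (fun ω => g ω ^ k) μ := by
      intro k
      rcases Nat.even_or_odd k with he | ho
      · obtain ⟨j, hj⟩ := he
        have hk : k = 2*j := by omega
        subst hk; exact hg2 j
      · obtain ⟨j, hj⟩ := ho
        subst hj
        refine ((hg2 j).add (by simpa [show 2*(j+1) = 2*j+2 by ring] using hg2 (j+1))).mono'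
          ((hgm.pow_const _).aestronglyMeasurable) ?_
        filter_upwards with ω
        rw [Real.norm_eq_abs, abs_of_nonneg (pow_nonneg (hg0 ω) _)]
        exact odd_pow_le j (g ω) (hg0 ω)
    have hg2' : ∀ j : ℕ, Integrable (fun ω => g ω ^ (2*j+2)) μ := by
      intro j
      simpa [show 2*(j+1) = 2*j+2 by ring] using hg2 (j+1)
    have hgd' : ∀ j : ℕ, (∫ ω, g ω ^ (2*j+2) ∂μ) ≤ ∫ ω, (a ω) ^ (2*j+2) ∂μ := by
      intro j
      have := hgd (j+1)
      simpa [show 2*(j+1) = 2*j+2 by ring] using this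
    have hMom : ∀ k : ℕ, (∫ ω, g ω ^ k ∂μ) / k ! ≤ e k := by
      intro k
      rcases Nat.even_or_odd k with he | ho
      · obtain ⟨j, hj⟩ := he
        have hk : k = 2*j := by omega
        subst hk
        have h1 : (∫ ω, g ω ^ (2*j) ∂μ) / (2*j)! ≤ b j := by
          have hb_eq : b j = (∫ ω, (a ω) ^ (2*j) ∂μ) / (2*j)! := rfl
          rw [hb_eq]; gcongr ?_ / _; exact hgd j
        have h2 : e (2*j) = b j + b j := by
          show b ((2*j)/2) + b ((2*j+1)/2) = b j + b j
          rw [show (2*j)/2 = j by omega, show (2*j+1)/2 = j by omega]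
        rw [h2]; linarith [hb_nonneg j]
      · obtain ⟨j, hj⟩ := ho
        subst hj
        have key : (∫ ω, g ω ^ (2*j+1) ∂μ) / (2*j+1)!
            ≤ b j + b (j+1) := by
          rw [← integral_div]
          calc ∫ ω, g ω ^ (2*j+1) / (2*j+1)! ∂μ
              ≤ ∫ ω, (g ω ^ (2*j) / (2*j)! + g ω ^ (2*j+2) / (2*j+2)!) ∂μ := by
                apply integral_mono ((hIk _).div_const _)
                  (((hg2 j).div_const _).add ((hg2' j).div_const _))
                intro ω
                exact odd_term_le j (g ω) (hg0 ω)
            _ = (∫ ω, g ω ^ (2*j) ∂μ) / (2*j)! + (∫ ω, g ω ^ (2*j+2) ∂μ) / (2*j+2)! := by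
                rw [integral_add ((hg2 j).div_const _) ((hg2' j).div_const _),
                  integral_div, integral_div]
            _ ≤ b j + b (j+1) := by
                have hb1 : b j = (∫ ω, (a ω) ^ (2*j) ∂μ) / (2*j)! := rfl
                have hb2 : b (j+1) = (∫ ω, (a ω) ^ (2*j+2) ∂μ) / (2*j+2)! := by
                  show (∫ ω, (a ω) ^ (2*(j+1)) ∂μ) / (2*(j+1))! = _
                  rw [show 2*(j+1) = 2*j+2 by ring]
                rw [hb1, hb2]
                gcongr ?_ / _ + ?_ / _
                · exact hgd j
                · exact hgd' j
        have h2 : e (2*j+1) = b j + b (j+1) := by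
          show b ((2*j+1)/2) + b ((2*j+1+1)/2) = b j + b (j+1)
          rw [show (2*j+1)/2 = j by omega, show (2*j+1+1)/2 = j+1 by omega]
        rw [h2]; exact key
    have hnn : ∀ k : ℕ, 0 ≤ (∫ ω, g ω ^ k ∂μ) / k ! := fun k =>
      div_nonneg (integral_nonneg fun ω => pow_nonneg (hg0 ω) _) (by positivity)
    have hsum : Summable (fun k => (∫ ω, g ω ^ k ∂μ) / k !) :=
      Summable.of_nonneg_of_le hnn hMom he_sum
    have hfk_nn : ∀ (k : ℕ) (ω : Ω), 0 ≤ g ω ^ k / k ! := fun k ω => by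
      have := hg0 ω; positivity
    have hfk_int : ∀ k : ℕ, Integrable (fun ω => g ω ^ k / k !) μ := fun k =>
      (hIk k).div_const _
    have hlin : ∀ k : ℕ, (∫⁻ ω, ‖g ω ^ k / k !‖₊ ∂μ)
        = ENNReal.ofReal ((∫ ω, g ω ^ k ∂μ) / k !) := by
      intro k
      rw [← integral_div]
      have h1 : (∫⁻ ω, ‖g ω ^ k / k !‖₊ ∂μ) = ∫⁻ ω, ENNReal.ofReal (g ω ^ k / k !) ∂μ :=
        lintegral_congr fun ω => Real.enorm_eq_ofReal (hfk_nn k ω)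
      rw [h1, ← ofReal_integral_eq_lintegral_ofReal (hfk_int k)
        (Filter.Eventually.of_forall (hfk_nn k))]
    have hfin : (∑' k, ∫⁻ ω, ‖g ω ^ k / k !‖₊ ∂μ) ≠ ⊤ := by
      have h1 : (∑' k : ℕ, ∫⁻ ω, ‖g ω ^ k / k !‖₊ ∂μ)
          = ∑' k : ℕ, ENNReal.ofReal ((∫ ω, g ω ^ k ∂μ) / k !) := tsum_congr hlin
      rw [h1]
      have hle : (∑' k : ℕ, ENNReal.ofReal ((∫ ω, g ω ^ k ∂μ) / k !))
          ≤ ∑' k : ℕ, ENNReal.ofReal (e k) :=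
        ENNReal.tsum_le_tsum fun k => ENNReal.ofReal_le_ofReal (hMom k)
      rw [← ENNReal.ofReal_tsum_of_nonneg he_nonneg he_sum] at hle
      exact ne_top_of_le_ne_top ENNReal.ofReal_ne_top hle
    have hexp_sum : ∀ x : ℝ, HasSum (fun k => x ^ k / (k ! : ℝ)) (Real.exp x) := by
      intro x
      rw [Real.exp_eq_exp_ℝ]
      exact NormedSpace.expSeries_div_hasSum_exp x
    have hint_exp : Integrable (fun ω => Real.exp (g ω)) μ := by
      constructor
      · exact (Real.measurable_exp.comp hgm).aestronglyMeasurable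
      · rw [HasFiniteIntegral]
        have h1 : (∫⁻ ω, ‖Real.exp (g ω)‖₊ ∂μ)
            = ∫⁻ ω, ∑' k : ℕ, ENNReal.ofReal (g ω ^ k / k !) ∂μ := by
          refine lintegral_congr fun ω => ?_
          rw [← ENNReal.ofReal_tsum_of_nonneg (fun k => hfk_nn k ω)
            (hexp_sum (g ω)).summable, (hexp_sum (g ω)).tsum_eq]
          exact Real.enorm_eq_ofReal (Real.exp_pos _).le
        rw [show (∫⁻ ω, ‖Real.exp (g ω)‖ₑ ∂μ) = _ from h1, lintegral_tsum (fun k => ((hgm.pow_const k).div_const _).ennreal_ofReal.aemeasurable)]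
        have h2 : (∑' k : ℕ, ∫⁻ ω, ENNReal.ofReal (g ω ^ k / k !) ∂μ)
            = ∑' k : ℕ, ∫⁻ ω, ‖g ω ^ k / k !‖₊ ∂μ := by
          refine tsum_congr fun k => lintegral_congr fun ω => ?_
          exact (Real.enorm_eq_ofReal (hfk_nn k ω)).symm
        rw [h2]
        exact lt_top_iff_ne_top.mpr hfin
    have hrepr : (∫ ω, Real.exp (g ω) ∂μ) = ∑' k, (∫ ω, g ω ^ k ∂μ) / k ! := by
      have hfun : (fun ω => Real.exp (g ω)) = fun ω => ∑' k : ℕ, g ω ^ k / k ! :=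
        funext fun ω => ((hexp_sum (g ω)).tsum_eq).symm
      rw [hfun, integral_tsum (fun k => (hfk_int k).1) hfin]
      exact tsum_congr fun k => integral_div _ _
    exact ⟨hIk, hMom, hint_exp, hrepr⟩
  -- apply the master lemma
  obtain ⟨hIa, hMa, hEa, hRa⟩ := master a hameas hapos (fun j => hinta (2*j)) (fun j => le_refl _)
  have hαm := fun n => master (α n) (hmeas n) (hpos n) (fun j => hintn n j) (fun j => hdom n j)
  have hIkn : ∀ n k, Integrable (fun ω => (α n ω) ^ k) μ := fun n => (hαm n).1
  have hMn : ∀ n k, (∫ ω, (α n ω)^k ∂μ)/k ! ≤ e k := fun n => (hαm n).2.1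
  have hRn : ∀ n, (∫ ω, Real.exp (α n ω) ∂μ) = ∑' k, (∫ ω, (α n ω)^k ∂μ)/k ! :=
    fun n => (hαm n).2.2.2
  refine ⟨hEa, ?_⟩
  -- L² convergence
  have hd2 : Tendsto (fun n => ∫ ω, (α n ω - a ω)^2 ∂μ) atTop (nhds 0) := by
    refine (hLk 2 one_le_two).congr fun n => ?_
    refine integral_congr_ae (Filter.Eventually.of_forall fun ω => ?_)
    exact sq_abs _
  have hsq_int : ∀ n, Integrable (fun ω => (α n ω - a ω)^2) μ := by
    intro n
    have h1 : Integrable (fun ω => 2*(α n ω)^2 + 2*(a ω)^2) μ :=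
      ((show Integrable (fun ω => (α n ω)^2) μ by simpa using hintn n 1).const_mul 2).add
        ((hinta 2).const_mul 2)
    refine h1.mono' (((hmeas n).sub hameas).pow_const 2).aestronglyMeasurable ?_
    filter_upwards with ω
    rw [Real.norm_eq_abs, abs_of_nonneg (sq_nonneg _)]
    nlinarith [sq_nonneg (α n ω + a ω)]
  -- moment convergence
  have hmomconv : ∀ k : ℕ, Tendsto (fun n => ∫ ω, (α n ω)^k ∂μ) atTop
      (nhds (∫ ω, (a ω)^k ∂μ)) := by
    intro k
    rcases Nat.eq_zero_or_pos k with hk0 | hkpos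
    · subst hk0
      simp only [pow_zero]
      exact tendsto_const_nhds
    · rw [Metric.tendsto_atTop]
      intro ε hε
      set M : ℝ := ∫ ω, (a ω)^(2*(k-1)) ∂μ with hM
      have hM0 : 0 ≤ M := integral_nonneg fun ω => pow_nonneg (hapos ω) _
      have hkM : (0:ℝ) ≤ (k:ℝ)*M := mul_nonneg (Nat.cast_nonneg k) hM0
      set t : ℝ := (2*((k:ℝ)*M) + 1)/ε with ht_def
      have ht : 0 < t := div_pos (by linarith) hε
      have hkt : (0:ℝ) < (k:ℝ)*t := mul_pos (by exact_mod_cast hkpos) ht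
      have hhalf : (k:ℝ)/(2*t)*(M + M) < ε/2 := by
        have h1 : (k:ℝ)/(2*t)*(M+M) = ((k:ℝ)*M)/t := by
          field_simp
          ring
        rw [h1, ht_def, div_div_eq_mul_div, div_lt_iff₀ (by linarith)]
        nlinarith [mul_nonneg hkM hε.le, hε]
      obtain ⟨N, hN⟩ := (Metric.tendsto_atTop.1 hd2) (ε/(2*((k:ℝ)*t)))
        (div_pos hε (by linarith))
      refine ⟨N, fun n hn => ?_⟩
      rw [Real.dist_eq]
      have hint1 : Integrable (fun ω => (α n ω)^k - (a ω)^k) μ := (hIkn n k).sub (hinta k)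
      have habs : |(∫ ω, (α n ω)^k ∂μ) - ∫ ω, (a ω)^k ∂μ|
          ≤ ∫ ω, |(α n ω)^k - (a ω)^k| ∂μ := by
        rw [← integral_sub (hIkn n k) (hinta k)]
        have h := norm_integral_le_integral_norm (μ := μ)
          (f := fun ω => (α n ω)^k - (a ω)^k)
        simpa [Real.norm_eq_abs] using h
      have ia1 : Integrable (fun ω => (k:ℝ)*t*(α n ω - a ω)^2) μ := (hsq_int n).const_mul _
      have ia2 : Integrable (fun ω => (α n ω)^(2*(k-1)) + (a ω)^(2*(k-1))) μ :=
        (hIkn n (2*(k-1))).add (hinta (2*(k-1)))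
      have ia3 : Integrable
          (fun ω => (k:ℝ)/(2*t)*((α n ω)^(2*(k-1)) + (a ω)^(2*(k-1)))) μ :=
        ia2.const_mul _
      have hint2 : Integrable (fun ω => (k:ℝ)*t*(α n ω - a ω)^2
          + (k:ℝ)/(2*t)*((α n ω)^(2*(k-1)) + (a ω)^(2*(k-1)))) μ := ia1.add ia3
      have hstep : (∫ ω, |(α n ω)^k - (a ω)^k| ∂μ)
          ≤ (k:ℝ)*t*(∫ ω, (α n ω - a ω)^2 ∂μ)
            + (k:ℝ)/(2*t)*((∫ ω, (α n ω)^(2*(k-1)) ∂μ) + M) := by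
        rw [hM]
        calc (∫ ω, |(α n ω)^k - (a ω)^k| ∂μ)
            ≤ ∫ ω, ((k:ℝ)*t*(α n ω - a ω)^2
                + (k:ℝ)/(2*t)*((α n ω)^(2*(k-1)) + (a ω)^(2*(k-1)))) ∂μ := by
              apply integral_mono hint1.abs hint2
              intro ω
              exact pow_diff_bound k t _ _ ht (hpos n ω) (hapos ω)
          _ = (k:ℝ)*t*(∫ ω, (α n ω - a ω)^2 ∂μ)
              + (k:ℝ)/(2*t)*((∫ ω, (α n ω)^(2*(k-1)) ∂μ) + ∫ ω, (a ω)^(2*(k-1)) ∂μ) := by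
              rw [integral_add ia1 ia3, integral_const_mul, integral_const_mul,
                integral_add (hIkn n (2*(k-1))) (hinta (2*(k-1)))]
      have hdom' : (∫ ω, (α n ω)^(2*(k-1)) ∂μ) ≤ M := by
        rw [hM]; exact hdom n (k-1)
      have hd2n : (∫ ω, (α n ω - a ω)^2 ∂μ) < ε/(2*((k:ℝ)*t)) := by
        have h := hN n hn
        rwa [Real.dist_eq, sub_zero,
          abs_of_nonneg (integral_nonneg fun ω => sq_nonneg _)] at h
      calc |(∫ ω, (α n ω)^k ∂μ) - ∫ ω, (a ω)^k ∂μ|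
          ≤ ∫ ω, |(α n ω)^k - (a ω)^k| ∂μ := habs
        _ ≤ (k:ℝ)*t*(∫ ω, (α n ω - a ω)^2 ∂μ)
            + (k:ℝ)/(2*t)*((∫ ω, (α n ω)^(2*(k-1)) ∂μ) + M) := hstep
        _ < ε := by
            have hb1 : (k:ℝ)*t*(∫ ω, (α n ω - a ω)^2 ∂μ)
                < (k:ℝ)*t*(ε/(2*((k:ℝ)*t))) := mul_lt_mul_of_pos_left hd2n hkt
            have hb1' : (k:ℝ)*t*(ε/(2*((k:ℝ)*t))) = ε/2 := by
              field_simp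
            have hb2 : (k:ℝ)/(2*t)*((∫ ω, (α n ω)^(2*(k-1)) ∂μ) + M)
                ≤ (k:ℝ)/(2*t)*(M+M) := by
              apply mul_le_mul_of_nonneg_left _ (by positivity)
              linarith
            linarith
  -- summability of the moment series
  have hsum_n : ∀ n, Summable (fun k => (∫ ω, (α n ω)^k ∂μ)/k !) := fun n =>
    Summable.of_nonneg_of_le
      (fun k => div_nonneg (integral_nonneg fun ω => pow_nonneg (hpos n ω) _) (by positivity))
      (hMn n) he_sum
  have hsum_a : Summable (fun k => (∫ ω, (a ω)^k ∂μ)/k !) :=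
    Summable.of_nonneg_of_le
      (fun k => div_nonneg (integral_nonneg fun ω => pow_nonneg (hapos ω) _) (by positivity))
      hMa he_sum
  rw [Metric.tendsto_atTop]
  intro ε hε
  obtain ⟨K, hK⟩ := (hT.eventually_lt_const (show (0:ℝ) < ε/4 by positivity)).exists
  have hfs : Tendsto (fun n => ∑ k ∈ Finset.range K,
      |(∫ ω, (α n ω)^k ∂μ) - ∫ ω, (a ω)^k ∂μ|/k !) atTop (nhds 0) := by
    have h0 : ∀ k : ℕ, Tendsto
        (fun n => |(∫ ω, (α n ω)^k ∂μ) - ∫ ω, (a ω)^k ∂μ|/k !) atTop (nhds 0) := by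
      intro k
      have h1 : Tendsto (fun n => (∫ ω, (α n ω)^k ∂μ) - ∫ ω, (a ω)^k ∂μ) atTop (nhds 0) := by
        simpa using (hmomconv k).sub (tendsto_const_nhds (x := ∫ ω, (a ω)^k ∂μ))
      have h2 := h1.abs
      rw [abs_zero] at h2
      simpa using h2.div_const (k ! : ℝ)
    have h3 := tendsto_finset_sum (Finset.range K) (fun k (_ : k ∈ Finset.range K) => h0 k)
    simpa using h3
  obtain ⟨N, hN⟩ := (Metric.tendsto_atTop.1 hfs) (ε/4) (by positivity)
  refine ⟨N, fun n hn => ?_⟩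
  rw [Real.dist_eq]
  set Tn : ℝ := ∑' i, (∫ ω, (α n ω)^(i+K) ∂μ)/(i+K)! with hTn
  set Ta : ℝ := ∑' i, (∫ ω, (a ω)^(i+K) ∂μ)/(i+K)! with hTa
  have hsplit_n : (∫ ω, Real.exp (α n ω) ∂μ)
      = (∑ k ∈ Finset.range K, (∫ ω, (α n ω)^k ∂μ)/k !) + Tn := by
    rw [hRn n, ← Summable.sum_add_tsum_nat_add K (hsum_n n)]
  have hsplit_a : (∫ ω, Real.exp (a ω) ∂μ)
      = (∑ k ∈ Finset.range K, (∫ ω, (a ω)^k ∂μ)/k !) + Ta := by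
    rw [hRa, ← Summable.sum_add_tsum_nat_add K hsum_a]
  have hTn_nn : 0 ≤ Tn := tsum_nonneg fun i =>
    div_nonneg (integral_nonneg fun ω => pow_nonneg (hpos n ω) _) (by positivity)
  have hTa_nn : 0 ≤ Ta := tsum_nonneg fun i =>
    div_nonneg (integral_nonneg fun ω => pow_nonneg (hapos ω) _) (by positivity)
  have hTn_le : Tn ≤ ∑' i, e (i+K) :=
    ((summable_nat_add_iff K).2 (hsum_n n)).tsum_le_tsum (fun i => hMn n (i+K))
      ((summable_nat_add_iff K).2 he_sum)
  have hTa_le : Ta ≤ ∑' i, e (i+K) :=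
    ((summable_nat_add_iff K).2 hsum_a).tsum_le_tsum (fun i => hMa (i+K))
      ((summable_nat_add_iff K).2 he_sum)
  have hS : |∑ k ∈ Finset.range K,
      ((∫ ω, (α n ω)^k ∂μ)/(k !) - (∫ ω, (a ω)^k ∂μ)/k !)| < ε/4 := by
    have h1 : |∑ k ∈ Finset.range K, ((∫ ω, (α n ω)^k ∂μ)/(k !) - (∫ ω, (a ω)^k ∂μ)/k !)|
        ≤ ∑ k ∈ Finset.range K, |(∫ ω, (α n ω)^k ∂μ) - ∫ ω, (a ω)^k ∂μ|/k ! := by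
      refine (Finset.abs_sum_le_sum_abs _ _).trans (le_of_eq ?_)
      refine Finset.sum_congr rfl fun k _ => ?_
      rw [div_sub_div_same, abs_div, abs_of_nonneg (by positivity : (0:ℝ) ≤ (k ! : ℝ))]
    have h2 := hN n hn
    rw [Real.dist_eq, sub_zero] at h2
    have h3 := lt_of_abs_lt h2
    linarith
  have hTd : |Tn - Ta| < ε/4 := abs_sub_lt_iff.mpr ⟨by linarith, by linarith⟩
  calc |(∫ ω, Real.exp (α n ω) ∂μ) - ∫ ω, Real.exp (a ω) ∂μ|
      = |(∑ k ∈ Finset.range K,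
          ((∫ ω, (α n ω)^k ∂μ)/(k !) - (∫ ω, (a ω)^k ∂μ)/k !)) + (Tn - Ta)| := by
        rw [hsplit_n, hsplit_a, Finset.sum_sub_distrib]
        congr 1
        ring
    _ ≤ |∑ k ∈ Finset.range K,
          ((∫ ω, (α n ω)^k ∂μ)/(k !) - (∫ ω, (a ω)^k ∂μ)/k !)| + |Tn - Ta| := abs_add_le _ _
    _ < ε/4 + ε/4 := add_lt_add hS hTd
    _ < ε := by linarith
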